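/- Let G be a finite connected simple graph and w an injective real-valued edge weight function. For every λ ∈ ℝ and every pair of vertices x, y of G: x and y are connected in the subgraph of the minimal spanning tree MST(G,w) consisting of its edges of weight at most λ if and only if x and y are connected in the subgraph of G consisting of all edges of G of weight at most λ. In other words, the λ-clusters (connected components of the level-λ subgraph) of G coincide with the connected components of the MST restricted to edges with label at most λ. -/

import Mathlib

open scoped BigOperators symmDiff

variable {V : Type*}

/-- The total weight of (the edges of) a graph `T`, for a weight function `w` on `Sym2 V`. -/
noncomputable def edgeWeight (w : Sym2 V → ℝ) (T : SimpleGraph V) : ℝ :=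
  ∑ᶠ e ∈ T.edgeSet, w e

/-- `T` is a spanning tree of `G`: a subgraph of `G` (on the same, full vertex set)
that is connected and acyclic. -/
def IsSpanningTree (G T : SimpleGraph V) : Prop := T ≤ G ∧ T.IsTree

/-- `T` is a minimal spanning tree of `G` with respect to the weights `w`. -/
def IsMST (G : SimpleGraph V) (w : Sym2 V → ℝ) (T : SimpleGraph V) : Prop :=
  IsSpanningTree G T ∧
    ∀ T' : SimpleGraph V, IsSpanningTree G T' → edgeWeight w T ≤ edgeWeight w T'

open SimpleGraph

lemma reach_del {H : SimpleGraph V} {c d : V}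
    (hr : (H \ SimpleGraph.fromEdgeSet {s(c,d)}).Reachable c d) :
    ∀ {u v : V}, H.Reachable u v → (H \ SimpleGraph.fromEdgeSet {s(c,d)}).Reachable u v := by
  intro u v huv
  obtain ⟨q⟩ := huv
  induction q with
  | nil => exact Reachable.refl _
  | @cons u b v h p ih =>
    refine Reachable.trans ?_ ih
    by_cases he : s(u, b) = s(c, d)
    · rw [Sym2.eq_iff] at he
      rcases he with ⟨rfl, rfl⟩ | ⟨rfl, rfl⟩
      · exact hr
      · exact hr.symm
    · refine Adj.reachable ?_
      have : ¬ s(u, b) ∈ ({s(c,d)} : Set (Sym2 V)) := by simpa using he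
      exact (SimpleGraph.deleteEdges_adj).mpr ⟨h, this⟩

lemma exists_tree_le [Fintype V] :
    ∀ (n : ℕ) (H : SimpleGraph V), H.edgeSet.ncard ≤ n → H.Connected →
      ∃ T : SimpleGraph V, T ≤ H ∧ T.IsTree := by
  intro n
  induction n with
  | zero =>
    intro H hcard hconn
    classical
    have hfin : H.edgeSet.Finite := Set.toFinite _
    have h0 : H.edgeSet = ∅ := by
      rw [← Set.ncard_eq_zero hfin]; omega
    have hbot : H = ⊥ := by rwa [SimpleGraph.edgeSet_eq_empty] at h0
    exact ⟨H, le_rfl, ⟨hconn, by rw [hbot]; exact isAcyclic_bot⟩⟩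
  | succ n ih =>
    intro H hcard hconn
    classical
    by_cases hac : H.IsAcyclic
    · exact ⟨H, le_rfl, ⟨hconn, hac⟩⟩
    · rw [isAcyclic_iff_forall_adj_isBridge] at hac
      push_neg at hac
      obtain ⟨x, y, hxy, hbr⟩ := hac
      rw [isBridge_iff] at hbr
      push_neg at hbr
      have hreach : (H \ SimpleGraph.fromEdgeSet {s(x,y)}).Reachable x y := hbr
      have hconn' : (H.deleteEdges {s(x,y)}).Connected := by
        haveI := hconn.nonempty
        exact SimpleGraph.Connected.mk (fun u v => reach_del hreach (hconn.preconnected u v))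
      have hcard' : (H.deleteEdges {s(x,y)}).edgeSet.ncard ≤ n := by
        rw [SimpleGraph.edgeSet_deleteEdges,
          Set.ncard_diff_singleton_of_mem (H.mem_edgeSet.mpr hxy)]
        omega
      obtain ⟨T, hle, hT⟩ := ih _ hcard' hconn'
      exact ⟨T, hle.trans (SimpleGraph.deleteEdges_le _), hT⟩

lemma tree_ncard_edgeSet [Fintype V] {G : SimpleGraph V} (hG : G.IsTree) :
    G.edgeSet.ncard + 1 = Fintype.card V := by
  classical
  haveI : Fintype G.edgeSet := Set.Finite.fintype (Set.toFinite _)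
  rw [Set.ncard_eq_toFinset_card']
  exact hG.card_edgeFinset

lemma mst_adj_reachable [Fintype V] (G : SimpleGraph V) (w : Sym2 V → ℝ)
    (T : SimpleGraph V) (hT : IsMST G w T) {a b : V} (hab : G.Adj a b) {lam : ℝ}
    (hwab : w s(a, b) ≤ lam) :
    (SimpleGraph.fromEdgeSet {e | e ∈ T.edgeSet ∧ w e ≤ lam}).Reachable a b := by
  classical
  obtain ⟨p, hp, -⟩ := hT.1.2.existsUnique_path a b
  have hall : ∀ f ∈ p.edges, w f ≤ lam := by
    by_contra hcon
    push_neg at hcon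
    obtain ⟨f, hf, hfw⟩ := hcon
    revert hf hfw
    induction f using Sym2.ind with
    | _ c d =>
    intro hf hfw
    have hfT : s(c, d) ∈ T.edgeSet := p.edges_subset_edgeSet hf
    have habT : s(a, b) ∉ T.edgeSet := by
      intro habT
      obtain ⟨q, hq, huniq⟩ := hT.1.2.existsUnique_path a b
      have h1 : p = q := huniq p hp
      have h2 : (SimpleGraph.Walk.cons (T.mem_edgeSet.mp habT) SimpleGraph.Walk.nil) = q :=
        huniq _ (by simp [hab.ne])
      rw [h1, ← h2] at hf
      simp only [SimpleGraph.Walk.edges_cons, SimpleGraph.Walk.edges_nil, List.mem_singleton]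
        at hf
      rw [hf] at hfw
      exact absurd hwab (not_le.mpr hfw)
    have hne : s(a, b) ≠ s(c, d) := fun h => habT (h ▸ hfT)
    set H := SimpleGraph.fromEdgeSet (T.edgeSet ∪ {s(a, b)}) with hHdef
    have hTH : T ≤ H := by
      conv_lhs => rw [← SimpleGraph.fromEdgeSet_edgeSet T]
      exact SimpleGraph.fromEdgeSet_mono Set.subset_union_left
    have hHab : H.Adj a b := (SimpleGraph.fromEdgeSet_adj _).mpr ⟨Or.inr rfl, hab.ne⟩
    have hpe : ∀ e ∈ p.edges, e ∈ H.edgeSet := by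
      intro e he
      rw [SimpleGraph.edgeSet_fromEdgeSet]
      exact ⟨Or.inl (p.edges_subset_edgeSet he),
        T.not_isDiag_of_mem_edgeSet (p.edges_subset_edgeSet he)⟩
    have hq : (SimpleGraph.Walk.cons hHab (p.transfer H hpe).reverse).IsCycle := by
      rw [SimpleGraph.Walk.cons_isCycle_iff]
      refine ⟨(hp.transfer hpe).reverse, ?_⟩
      rw [SimpleGraph.Walk.edges_reverse, List.mem_reverse, SimpleGraph.Walk.edges_transfer]
      exact fun h => habT (p.edges_subset_edgeSet h)
    have hcyc : H.Adj c d ∧ (H \ SimpleGraph.fromEdgeSet {s(c, d)}).Reachable c d := by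
      show H.Adj c d ∧ (H.deleteEdges {s(c, d)}).Reachable c d
      rw [SimpleGraph.adj_and_reachable_delete_edges_iff_exists_cycle]
      refine ⟨a, _, hq, ?_⟩
      rw [SimpleGraph.Walk.edges_cons, List.mem_cons]
      right
      rw [SimpleGraph.Walk.edges_reverse, List.mem_reverse, SimpleGraph.Walk.edges_transfer]
      exact hf
    have hHconn : H.Connected := (hT.1.2.isConnected).mono hTH
    set T₂ := H.deleteEdges {s(c, d)} with hT₂def
    have hT₂conn : T₂.Connected := by
      haveI := hHconn.nonempty
      exact SimpleGraph.Connected.mk (fun u v => reach_del hcyc.2 (hHconn.preconnected u v))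
    have hT₂E : T₂.edgeSet = (T.edgeSet ∪ {s(a, b)}) \ {s(c, d)} := by
      rw [hT₂def, SimpleGraph.edgeSet_deleteEdges, hHdef, SimpleGraph.edgeSet_fromEdgeSet]
      ext e
      simp only [Set.mem_diff, Set.mem_union, Set.mem_singleton_iff, Set.mem_setOf_eq]
      constructor
      · rintro ⟨⟨h1, _⟩, h3⟩; exact ⟨h1, h3⟩
      · rintro ⟨h1, h3⟩
        refine ⟨⟨h1, ?_⟩, h3⟩
        rcases h1 with h | rfl
        · exact T.not_isDiag_of_mem_edgeSet h
        · exact G.not_isDiag_of_mem_edgeSet (G.mem_edgeSet.mpr hab)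
    have hT₂card : T₂.edgeSet.ncard = T.edgeSet.ncard := by
      rw [hT₂E, Set.union_singleton,
        Set.ncard_diff_singleton_of_mem (Set.mem_insert_of_mem _ hfT),
        Set.ncard_insert_of_notMem habT (Set.toFinite _)]
      omega
    have hT₂tree : T₂.IsTree := by
      obtain ⟨T₃, hle, htr⟩ := exists_tree_le T₂.edgeSet.ncard T₂ le_rfl hT₂conn
      have hc3 := tree_ncard_edgeSet htr
      have hcT := tree_ncard_edgeSet hT.1.2
      have hccard : T₂.edgeSet.ncard ≤ T₃.edgeSet.ncard := by omega
      have hEq : T₃.edgeSet = T₂.edgeSet :=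
        Set.eq_of_subset_of_ncard_le (SimpleGraph.edgeSet_mono hle) hccard (Set.toFinite _)
      rwa [← SimpleGraph.edgeSet_inj.mp hEq]
    have hT₂G : T₂ ≤ G := by
      have hHG : H ≤ G := by
        conv_rhs => rw [← SimpleGraph.fromEdgeSet_edgeSet G]
        exact SimpleGraph.fromEdgeSet_mono
          (Set.union_subset (SimpleGraph.edgeSet_mono hT.1.1)
            (Set.singleton_subset_iff.mpr (G.mem_edgeSet.mpr hab)))
      exact (SimpleGraph.deleteEdges_le _).trans hHG
    have hmin := hT.2 T₂ ⟨hT₂G, hT₂tree⟩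
    have hW2 : edgeWeight w T₂ = (∑ᶠ e ∈ T.edgeSet \ {s(c, d)}, w e) + w s(a, b) := by
      have hset : T₂.edgeSet = (T.edgeSet \ {s(c, d)}) ∪ {s(a, b)} := by
        rw [hT₂E]
        ext e
        simp only [Set.mem_diff, Set.mem_union, Set.mem_singleton_iff]
        constructor
        · rintro ⟨h1 | rfl, h2⟩
          · exact Or.inl ⟨h1, h2⟩
          · exact Or.inr rfl
        · rintro (⟨h1, h2⟩ | rfl)
          · exact ⟨Or.inl h1, h2⟩
          · exact ⟨Or.inr rfl, hne⟩
      rw [edgeWeight, hset,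
        finsum_mem_union (Set.disjoint_singleton_right.mpr fun h => habT h.1)
          (Set.toFinite _) (Set.toFinite _),
        finsum_mem_singleton]
    have hWT : edgeWeight w T = (∑ᶠ e ∈ T.edgeSet \ {s(c, d)}, w e) + w s(c, d) := by
      rw [edgeWeight]
      conv_lhs => rw [show T.edgeSet = (T.edgeSet \ {s(c, d)}) ∪ {s(c, d)} from
        (Set.diff_union_of_subset (Set.singleton_subset_iff.mpr hfT)).symm]
      rw [finsum_mem_union Set.disjoint_sdiff_left (Set.toFinite _) (Set.toFinite _),
        finsum_mem_singleton]
    rw [hW2, hWT] at hmin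
    linarith
  exact ⟨p.transfer _ (fun e he => by
    rw [SimpleGraph.edgeSet_fromEdgeSet]
    exact ⟨⟨p.edges_subset_edgeSet he, hall e he⟩,
      T.not_isDiag_of_mem_edgeSet (p.edges_subset_edgeSet he)⟩)⟩

/-- for every level `λ`, the λ-clusters of `G` (components of the subgraph
of edges of weight `≤ λ`) coincide with the components of the MST restricted to the
edges of weight `≤ λ`. -/
theorem mst_level_clusters [Fintype V] (G : SimpleGraph V) (hG : G.Connected)
    (w : Sym2 V → ℝ) (hw : Set.InjOn w G.edgeSet)
    (T : SimpleGraph V) (hT : IsMST G w T) (lam : ℝ) (x y : V) :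
    (SimpleGraph.fromEdgeSet {e | e ∈ T.edgeSet ∧ w e ≤ lam}).Reachable x y ↔
      (SimpleGraph.fromEdgeSet {e | e ∈ G.edgeSet ∧ w e ≤ lam}).Reachable x y := by
  constructor
  · intro h
    exact SimpleGraph.Reachable.mono (SimpleGraph.fromEdgeSet_mono
      (fun e he => ⟨SimpleGraph.edgeSet_mono hT.1.1 he.1, he.2⟩)) h
  · intro h
    obtain ⟨q⟩ := h
    induction q with
    | nil => exact Reachable.refl _
    | @cons u b v h' p ih =>
      rw [SimpleGraph.fromEdgeSet_adj] at h'
      obtain ⟨⟨hmem, hle⟩, hne⟩ := h'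
      exact (mst_adj_reachable G w T hT (G.mem_edgeSet.mp hmem) hle).trans ih
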